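/- Let q = p^d and let V be a free module over Q_q ⊗_{Q_p} Q̄_p (where Q̄_p is an algebraic closure of Q_p) of rank ≥ 2, with F : V → V a (σ⊗1)-semilinear bijection. Then (V, F) has a nonzero proper sub-object stable under F that is free over Q_q ⊗ Q̄_p; equivalently, every simple F-isocrystal on F_q with coefficients in Q̄_p has rank 1. -/

import Mathlib

open TensorProduct

noncomputable section

open Fin.NatCast in
set_option maxHeartbeats 2000000 in
theorem aux_simple_isocrystal
    (k : Type*) [Field k] (Qq : Type*) [Field Qq] [Algebra k Qq]
    [IsGalois k Qq] [FiniteDimensional k Qq] (d : ℕ) (hdeg : Module.finrank k Qq = d)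
    (σ : Qq ≃ₐ[k] Qq) (hσ : ∀ h : Qq ≃ₐ[k] Qq, h ∈ Subgroup.zpowers σ)
    (K : Type*) [Field K] [Algebra k K] [IsAlgClosed K]
    (V : Type*) [AddCommGroup V] [Module (Qq ⊗[k] K) V]
    (r : ℕ) (hr : 2 ≤ r) (b : Module.Basis (Fin r) (Qq ⊗[k] K) V)
    (F : V → V) (hadd : ∀ x y, F (x + y) = F x + F y)
    (hbij : Function.Bijective F)
    (hsemi : ∀ (a : Qq ⊗[k] K) (v : V),
      F (a • v) = (Algebra.TensorProduct.congr σ (AlgEquiv.refl : K ≃ₐ[k] K)) a • F v) :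
    ∃ W : Submodule (Qq ⊗[k] K) V, W ≠ ⊥ ∧ W ≠ ⊤ ∧ (∀ v ∈ W, F v ∈ W) ∧
      Module.Free (Qq ⊗[k] K) W := by
  classical
  -- basic setup
  letI algK : Algebra K (Qq ⊗[k] K) := Algebra.TensorProduct.rightAlgebra
  have halg : ∀ c : K, algebraMap K (Qq ⊗[k] K) c = 1 ⊗ₜ[k] c := fun c => rfl
  letI modKV : Module K V := Module.compHom V (algebraMap K (Qq ⊗[k] K))
  have hKsmul : ∀ (c : K) (x : V), c • x = (algebraMap K (Qq ⊗[k] K) c) • x := fun _ _ => rfl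
  letI : IsScalarTower K (Qq ⊗[k] K) V :=
    ⟨fun c a x => by
      rw [Algebra.smul_def, mul_smul, hKsmul]⟩
  have hd1 : 0 < d := hdeg ▸ Module.finrank_pos
  haveI : NeZero d := ⟨hd1.ne'⟩
  -- a K-basis of Qq ⊗[k] K of size d
  let u : Module.Basis (Fin d) k Qq := Module.finBasisOfFinrankEq k Qq hdeg
  let e : (K ⊗[k] Qq) ≃ₗ[K] (Qq ⊗[k] K) :=
    { toFun := Algebra.TensorProduct.comm k K Qq
      map_add' := map_add _
      map_smul' := fun c x => by
        simp only [RingHom.id_apply]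
        rw [Algebra.smul_def, Algebra.smul_def, map_mul]
        congr 1
      invFun := (Algebra.TensorProduct.comm k K Qq).symm
      left_inv := fun x => by simp
      right_inv := fun x => by simp }
  let basisR : Module.Basis (Fin d) K (Qq ⊗[k] K) := (u.baseChange K).map e
  haveI : Nontrivial (Qq ⊗[k] K) := nontrivial_of_ne (basisR ⟨0, hd1⟩) 0 (basisR.ne_zero _)
  haveI : Nontrivial V := nontrivial_of_ne (b ⟨0, by omega⟩) 0 (b.ne_zero _)
  haveI : Module.Finite K (Qq ⊗[k] K) := Module.Finite.of_basis basisR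
  haveI : Module.Finite (Qq ⊗[k] K) V := Module.Finite.of_basis b
  haveI : Module.Finite K V := Module.Finite.trans (Qq ⊗[k] K) V
  -- the semilinear twist
  set τ : (Qq ⊗[k] K) ≃ₐ[k] (Qq ⊗[k] K) :=
    Algebra.TensorProduct.congr σ (AlgEquiv.refl : K ≃ₐ[k] K) with hτ
  have hτtmul : ∀ (a : Qq) (c : K), τ (a ⊗ₜ[k] c) = (σ a) ⊗ₜ[k] c := by
    intro a c; simp [hτ]
  -- F as a K-linear endomorphism
  let Fl : V →ₗ[K] V :=
    { toFun := F
      map_add' := hadd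
      map_smul' := fun c x => by
        simp only [RingHom.id_apply]
        rw [hKsmul, hsemi, hKsmul]
        congr 1
        rw [halg, hτtmul, map_one]
  }
  have hF0 : F 0 = 0 := by
    have := hadd 0 0
    rw [add_zero] at this
    exact (left_eq_add.mp this)
  -- eigenvector
  obtain ⟨μ, hμ⟩ := Module.End.exists_eigenvalue Fl
  obtain ⟨v, hv⟩ := hμ.exists_hasEigenvector
  have hv0 : v ≠ 0 := hv.right
  have hFv : F v = (algebraMap K (Qq ⊗[k] K) μ) • v := by
    rw [← hKsmul]; exact hv.apply_eq_smul
  have hμ0 : μ ≠ 0 := by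
    intro h
    apply hv0
    apply hbij.injective
    rw [hFv, h, map_zero, zero_smul, hF0]
  -- an embedding of Qq into K
  haveI : Algebra.IsAlgebraic k Qq := Algebra.IsAlgebraic.of_finite k Qq
  let iota : Qq →ₐ[k] K := IsAlgClosed.lift
  have hiinj : Function.Injective iota := iota.toRingHom.injective
  -- the order of σ is d
  have hcard : Fintype.card (Qq ≃ₐ[k] Qq) = d := by
    rw [← Nat.card_eq_fintype_card, IsGalois.card_aut_eq_finrank, hdeg]
  have hord : orderOf σ = d := by
    rw [orderOf_eq_card_of_forall_mem_zpowers hσ, Nat.card_eq_fintype_card, hcard]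
  -- the characters
  let χ : Fin d → ((Qq ⊗[k] K) →ₐ[k] K) := fun j =>
    Algebra.TensorProduct.productMap (iota.comp (σ ^ (j : ℕ)).toAlgHom) (AlgHom.id k K)
  have hχtmul : ∀ (j : Fin d) (a : Qq) (c : K), χ j (a ⊗ₜ[k] c) = iota ((σ ^ (j : ℕ)) a) * c := by
    intro j a c; simp [χ]
  have hχinj : Function.Injective χ := by
    intro j j' h
    have h3 : (σ ^ (j : ℕ)) = (σ ^ (j' : ℕ)) := by
      ext a
      apply hiinj
      have := DFunLike.congr_fun h (a ⊗ₜ[k] (1 : K))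
      simpa [hχtmul] using this
    have := pow_injOn_Iio_orderOf (x := σ) (by rw [hord]; exact j.isLt)
      (by rw [hord]; exact j'.isLt) h3
    exact Fin.ext this
  have hχτ : ∀ (j : Fin d) (x : Qq ⊗[k] K), χ j (τ x) = χ (j + 1) x := by
    intro j x
    have key : ((χ j).comp τ.toAlgHom) = χ (j + 1) := by
      apply Algebra.TensorProduct.ext'
      intro a c
      simp only [AlgHom.comp_apply, AlgEquiv.toAlgHom_eq_coe, AlgHom.coe_coe, AlgEquiv.coe_toAlgHom]
      rw [hτtmul, hχtmul, hχtmul]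
      congr 2
      have h1 : (σ ^ (((j + 1 : Fin d)) : ℕ)) = σ ^ ((j : ℕ) + 1) := by
        conv_rhs => rw [← pow_mod_orderOf]
        rw [hord]
        congr 1
        simp [Fin.add_def]
      rw [h1, pow_succ, AlgEquiv.mul_apply]
    exact DFunLike.congr_fun key x
  have hχalg : ∀ (j : Fin d) (c : K), χ j (algebraMap K (Qq ⊗[k] K) c) = c := by
    intro j c
    rw [halg, hχtmul]
    simp
  -- the characters as K-linear maps glued into Φ
  let χl : Fin d → ((Qq ⊗[k] K) →ₗ[K] K) := fun j =>
    { toFun := χ j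
      map_add' := map_add _
      map_smul' := fun c x => by
        simp only [RingHom.id_apply, smul_eq_mul]
        rw [Algebra.smul_def, map_mul, hχalg] }
  let Φ : (Qq ⊗[k] K) →ₗ[K] (Fin d → K) := LinearMap.pi χl
  have hΦapp : ∀ (x : Qq ⊗[k] K) (j : Fin d), Φ x j = χ j x := fun x j => rfl
  have hli : LinearIndependent K (fun j : Fin d => (χ j).toLinearMap) :=
    (linearIndependent_algHom_toLinearMap k (Qq ⊗[k] K) K).comp χ hχinj
  have hΦsurj : Function.Surjective Φ := by
    rw [← LinearMap.range_eq_top]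
    by_contra hne
    obtain ⟨φ, hφ0, hφ⟩ := Submodule.exists_dual_map_eq_bot_of_lt_top
      (lt_top_iff_ne_top.mpr hne) inferInstance
    have hzero : ∀ x : Qq ⊗[k] K, φ (Φ x) = 0 := by
      intro x
      have hmem : φ (Φ x) ∈ Submodule.map φ (LinearMap.range Φ) :=
        Submodule.mem_map_of_mem (LinearMap.mem_range_self _ x)
      rw [hφ] at hmem
      exact (Submodule.mem_bot K).mp hmem
    have hpi : ∀ y : Fin d → K, y = ∑ i : Fin d, y i • (Pi.single i 1 : Fin d → K) := by
      intro y
      ext j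
      rw [Finset.sum_apply]
      simp [Pi.single_apply, eq_comm]
    have hsum : ∑ i : Fin d, φ (Pi.single i 1) • (χ i).toLinearMap = 0 := by
      refine LinearMap.ext fun x => ?_
      have h1 := hzero x
      rw [hpi (Φ x), map_sum] at h1
      simpa [hΦapp, mul_comm] using h1
    have hc : ∀ i : Fin d, φ (Pi.single i 1) = 0 :=
      Fintype.linearIndependent_iff.mp hli _ hsum
    apply hφ0
    ext y
    simpa using hc y
  have hfr1 : Module.finrank K (Qq ⊗[k] K) = d := by
    rw [Module.finrank_eq_card_basis basisR, Fintype.card_fin]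
  have hΦinj : Function.Injective Φ :=
    (LinearMap.injective_iff_surjective_of_finrank_eq_finrank
      (by rw [hfr1, Module.finrank_fintype_fun_eq_card, Fintype.card_fin])).mpr hΦsurj
  -- idempotent-like elements
  have hE : ∀ j : Fin d, ∃ E : Qq ⊗[k] K, ∀ j' : Fin d, χ j' E = (Pi.single j 1 : Fin d → K) j' := by
    intro j
    obtain ⟨E, hEe⟩ := hΦsurj (Pi.single j 1 : Fin d → K)
    exact ⟨E, fun j' => by rw [← hΦapp, hEe]⟩
  choose E hEs using hE
  -- the annihilator of v is zero
  have hann : ∀ x : Qq ⊗[k] K, x • v = 0 → x = 0 := by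
    intro x hx
    by_contra hx0
    have horb : ∀ m : ℕ, ((τ ^ m : (Qq ⊗[k] K) ≃ₐ[k] (Qq ⊗[k] K)) x) • v = 0 := by
      intro m
      induction m with
      | zero => simpa using hx
      | succ n ih =>
        have h1 : F (((τ ^ n) x) • v) = 0 := by rw [ih, hF0]
        rw [hsemi, hFv, ← mul_smul] at h1
        have h3 := congrArg (fun w => (algebraMap K (Qq ⊗[k] K) μ⁻¹) • w) h1
        simp only [smul_zero, ← mul_smul] at h3
        rw [show algebraMap K (Qq ⊗[k] K) μ⁻¹ * (τ ((τ ^ n) x) * algebraMap K (Qq ⊗[k] K) μ)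
            = τ ((τ ^ n) x) * (algebraMap K (Qq ⊗[k] K) μ⁻¹ * algebraMap K (Qq ⊗[k] K) μ)
            from by ring, ← map_mul, inv_mul_cancel₀ hμ0, map_one, mul_one] at h3
        rw [pow_succ', AlgEquiv.mul_apply]
        exact h3
    have hχpow : ∀ (m : ℕ) (j : Fin d), χ j ((τ ^ m) x) = χ (j + (m : Fin d)) x := by
      intro m
      induction m with
      | zero => intro j; simp
      | succ n ih =>
        intro j
        rw [pow_succ', AlgEquiv.mul_apply, hχτ, ih]
        congr 1
        rw [show ((n + 1 : ℕ) : Fin d) = (n : Fin d) + 1 from by push_cast; ring]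
        abel
    have hxne : ∃ j0 : Fin d, χ j0 x ≠ 0 := by
      by_contra h
      push_neg at h
      apply hx0
      apply hΦinj
      rw [map_zero]
      ext j
      rw [hΦapp, h j]
      rfl
    obtain ⟨j0, hj0⟩ := hxne
    set y : Fin d → (Qq ⊗[k] K) := fun j => (τ ^ (((j0 - j) : Fin d) : ℕ)) x with hy
    have hy1 : ∀ j, (y j) • v = 0 := fun j => horb _
    have hy2 : ∀ j, χ j (y j) = χ j0 x := by
      intro j
      rw [hy]
      rw [hχpow]
      congr 1
      rw [Fin.cast_val_eq_self]
      abel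
    set z : Qq ⊗[k] K :=
      ∑ j : Fin d, E j * algebraMap K (Qq ⊗[k] K) ((χ j0 x)⁻¹) * y j with hz
    have hz1 : z • v = 0 := by
      rw [hz, Finset.sum_smul]
      apply Finset.sum_eq_zero
      intro j _
      rw [mul_smul, hy1, smul_zero]
    have hz2 : z = 1 := by
      apply hΦinj
      ext j'
      rw [hΦapp, hΦapp, hz, map_sum]
      rw [Finset.sum_eq_single j']
      · rw [map_mul, map_mul, hEs, hχalg, hy2, Pi.single_eq_same, one_mul,
          inv_mul_cancel₀ hj0, map_one]
      · intro j _ hjj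
        rw [map_mul, map_mul, hEs, Pi.single_eq_of_ne (Ne.symm hjj), zero_mul, zero_mul]
      · intro h
        exact absurd (Finset.mem_univ j') h
    rw [hz2, one_smul] at hz1
    exact hv0 hz1
  -- conclusion
  have hts : ∀ a : Qq ⊗[k] K, LinearMap.toSpanSingleton (Qq ⊗[k] K) V v a = a • v :=
    fun a => rfl
  have hinj2 : Function.Injective (LinearMap.toSpanSingleton (Qq ⊗[k] K) V v) := by
    intro a a' h
    have h2 : (a - a') • v = 0 := by
      rw [sub_smul, ← hts, ← hts, h, sub_self]
    exact sub_eq_zero.mp (hann _ h2)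
  refine ⟨LinearMap.range (LinearMap.toSpanSingleton (Qq ⊗[k] K) V v), ?_, ?_, ?_, ?_⟩
  · intro hbot
    apply hv0
    have hvmem : v ∈ LinearMap.range (LinearMap.toSpanSingleton (Qq ⊗[k] K) V v) :=
      ⟨1, by rw [hts, one_smul]⟩
    rw [hbot] at hvmem
    simpa using hvmem
  · intro htop
    have hsurj2 : Function.Surjective (LinearMap.toSpanSingleton (Qq ⊗[k] K) V v) :=
      LinearMap.range_eq_top.mp htop
    have e2 : (Qq ⊗[k] K) ≃ₗ[Qq ⊗[k] K] V :=
      LinearEquiv.ofBijective _ ⟨hinj2, hsurj2⟩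
    have h1 : Module.finrank (Qq ⊗[k] K) V = r := by
      rw [Module.finrank_eq_card_basis b, Fintype.card_fin]
    have h2 : Module.finrank (Qq ⊗[k] K) V = 1 := by
      rw [← e2.finrank_eq, Module.finrank_self]
    omega
  · rintro w ⟨a, rfl⟩
    refine ⟨τ a * algebraMap K (Qq ⊗[k] K) μ, ?_⟩
    rw [hts, hts, hsemi, hFv, mul_smul]
  · exact Module.Free.of_equiv (LinearEquiv.ofInjective _ hinj2)

end

/-- **Simple `F`-isocrystals on `𝔽_q` with `ℚ̄_p`-coefficients have rank 1.**
Let `q = p^d` and let `Qq` be the unramified (cyclic Galois) extension of `ℚ_p` of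
degree `d` with Frobenius generator `σ`.  Let `V` be a free module of rank `r ≥ 2`
over `Qq ⊗[ℚ_p] ℚ̄_p` with `F : V → V` a `(σ ⊗ 1)`-semilinear bijection.  Then
`(V, F)` has a nonzero proper `F`-stable sub-object that is free over
`Qq ⊗[ℚ_p] ℚ̄_p`; equivalently, every simple `F`-isocrystal on `𝔽_q` with
coefficients in `ℚ̄_p` has rank 1. -/
theorem simple_isocrystal_rank_one
    (p d : ℕ) [Fact p.Prime]
    (Qq : Type*) [Field Qq] [Algebra ℚ_[p] Qq] [IsGalois ℚ_[p] Qq]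
    [FiniteDimensional ℚ_[p] Qq] (hdeg : Module.finrank ℚ_[p] Qq = d)
    (σ : Qq ≃ₐ[ℚ_[p]] Qq) (hσ : ∀ h : Qq ≃ₐ[ℚ_[p]] Qq, h ∈ Subgroup.zpowers σ)
    (V : Type*) [AddCommGroup V]
    [Module (Qq ⊗[ℚ_[p]] AlgebraicClosure ℚ_[p]) V]
    (r : ℕ) (hr : 2 ≤ r)
    (b : Module.Basis (Fin r) (Qq ⊗[ℚ_[p]] AlgebraicClosure ℚ_[p]) V)
    (F : V → V)
    (hadd : ∀ x y : V, F (x + y) = F x + F y)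
    (hbij : Function.Bijective F)
    (hsemi : ∀ (a : Qq ⊗[ℚ_[p]] AlgebraicClosure ℚ_[p]) (v : V),
      F (a • v) =
        (Algebra.TensorProduct.congr σ
          (AlgEquiv.refl : AlgebraicClosure ℚ_[p] ≃ₐ[ℚ_[p]] AlgebraicClosure ℚ_[p])) a
          • F v) :
    ∃ W : Submodule (Qq ⊗[ℚ_[p]] AlgebraicClosure ℚ_[p]) V,
      W ≠ ⊥ ∧ W ≠ ⊤ ∧ (∀ v ∈ W, F v ∈ W) ∧
        Module.Free (Qq ⊗[ℚ_[p]] AlgebraicClosure ℚ_[p]) W :=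
  aux_simple_isocrystal ℚ_[p] Qq d hdeg σ hσ (AlgebraicClosure ℚ_[p]) V r hr b F
    hadd hbij hsemi
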